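/- For all i ≥ 1 and d ≥ 1, A(i, λ_{2i}(d)) ≥ d. -/

import Mathlib

/-- `fstar f n = min {i : f^(i)(n) ≤ 1}`. -/
noncomputable def fstar (f : ℕ → ℕ) (n : ℕ) : ℕ := sInf {i | f^[i] n ≤ 1}

/-- The inverse-Ackermann-type functions: `lam 1 n = ⌊√n⌋`, `lam 2 n = ⌈log₂ n⌉`,
`lam (d) = (lam (d-2))*` for `d ≥ 3`. -/
noncomputable def lam : ℕ → ℕ → ℕ
  | 0 => fun _ => 0
  | 1 => Nat.sqrt
  | 2 => Nat.clog 2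
  | d + 3 => fstar (lam (d + 1))


/-- The Ackermann function: `A(0,j) = 2j`, `A(i,1) = 2`, `A(i,j) = A(i-1, A(i,j-1))`. -/
def Ack : ℕ → ℕ → ℕ
  | 0, j => 2 * j
  | _ + 1, 0 => 1
  | _ + 1, 1 => 2
  | i + 1, j + 2 => Ack i (Ack (i + 1) (j + 1))
termination_by i j => (i, j)

theorem lt_ack : ∀ i n : ℕ, 1 ≤ n → n < Ack i n
  | 0, n, h => by simp [Ack]; omega
  | i + 1, 1, _ => by simp [Ack]
  | i + 1, n + 2, _ => by
      have h1 : n + 1 < Ack (i + 1) (n + 1) := lt_ack (i + 1) (n + 1) (by omega)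
      have h2 : Ack (i + 1) (n + 1) < Ack i (Ack (i + 1) (n + 1)) :=
        lt_ack i _ (by omega)
      have h3 : Ack (i + 1) (n + 2) = Ack i (Ack (i + 1) (n + 1)) := by rw [Ack]
      omega
termination_by i n => (i, n)

theorem le_ack (i n : ℕ) : n ≤ Ack i n := by
  rcases n with _ | n
  · exact Nat.zero_le _
  · exact le_of_lt (lt_ack i (n + 1) (by omega))

theorem ack_le_succ : ∀ i j : ℕ, Ack i j ≤ Ack i (j + 1)
  | 0, j => by simp only [Ack]; omega
  | i + 1, 0 => by simp [Ack]
  | i + 1, j + 1 => by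
      have h3 : Ack (i + 1) (j + 2) = Ack i (Ack (i + 1) (j + 1)) := by rw [Ack]
      rw [h3]
      exact le_ack i _

theorem ack_mono (i : ℕ) : Monotone (Ack i) :=
  monotone_nat_of_le_succ (ack_le_succ i)

theorem ack_one_right : ∀ i : ℕ, 1 ≤ i → Ack i 1 = 2
  | i + 1, _ => by rw [Ack]

theorem ack1_pow (j : ℕ) : Ack 1 j = 2 ^ j := by
  induction j with
  | zero => simp [Ack]
  | succ j ih =>
      rcases j with _ | j
      · simp [Ack]
      · have h3 : Ack 1 (j + 2) = Ack 0 (Ack 1 (j + 1)) := by conv_lhs => rw [Ack]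
        rw [h3, ih, Ack]
        ring

theorem iter_le_one {f : ℕ → ℕ} (hdec : ∀ n, 2 ≤ n → f n < n)
    (hsm : ∀ n, n ≤ 1 → f n ≤ 1) : ∀ m x, x ≤ m + 1 → f^[m] x ≤ 1 := by
  intro m
  induction m with
  | zero => intro x hx; simpa using hx
  | succ m ih =>
      intro x hx
      rw [Function.iterate_succ_apply]
      apply ih
      by_cases h2 : 2 ≤ x
      · have := hdec x h2; omega
      · have := hsm x (by omega); omega

theorem fstar_self_le_one {f : ℕ → ℕ} {n : ℕ} (h : n ≤ 1) : fstar f n = 0 := by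
  have : 0 ∈ {i | f^[i] n ≤ 1} := by simpa using h
  simpa [fstar] using Nat.sInf_le this

theorem fstar_lt {f : ℕ → ℕ} (hdec : ∀ n, 2 ≤ n → f n < n)
    (hsm : ∀ n, n ≤ 1 → f n ≤ 1) {n : ℕ} (h2 : 2 ≤ n) : fstar f n < n := by
  have hmem : (n - 1) ∈ {i | f^[i] n ≤ 1} :=
    iter_le_one hdec hsm (n - 1) n (by omega)
  have := Nat.sInf_le hmem
  simp only [fstar]
  omega

theorem fstar_spec {f : ℕ → ℕ} (hdec : ∀ n, 2 ≤ n → f n < n)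
    (hsm : ∀ n, n ≤ 1 → f n ≤ 1) (n : ℕ) : f^[fstar f n] n ≤ 1 := by
  have hne : {i | f^[i] n ≤ 1}.Nonempty :=
    ⟨n, iter_le_one hdec hsm n n (by omega)⟩
  exact Nat.sInf_mem hne

theorem lam_even_succ (i : ℕ) (hi : 1 ≤ i) :
    lam (2 * (i + 1)) = fstar (lam (2 * i)) := by
  obtain ⟨k, rfl⟩ := Nat.exists_eq_add_of_le hi
  have h1 : 2 * (1 + k + 1) = (2 * k + 1) + 3 := by ring
  have h2 : 2 * (1 + k) = (2 * k + 1) + 1 := by ring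
  rw [h1, h2]
  rfl

theorem lam_props : ∀ i : ℕ, 1 ≤ i →
    (∀ n, 2 ≤ n → lam (2 * i) n < n) ∧ (∀ n, n ≤ 1 → lam (2 * i) n ≤ 1) := by
  intro i hi
  induction i with
  | zero => omega
  | succ i ih =>
      rcases Nat.eq_zero_or_pos i with h0 | h1
      · subst h0
        constructor
        · intro n hn
          show Nat.clog 2 n < n
          have hle : n ≤ 2 ^ (n - 1) := by
            have := Nat.lt_two_pow_self (n := n - 1); omega
          have := (Nat.clog_le_iff_le_pow (by norm_num)).mpr hle
          omega
        · intro n hn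
          show Nat.clog 2 n ≤ 1
          interval_cases n <;> simp
      · obtain ⟨hdec, hsm⟩ := ih h1
        rw [lam_even_succ i h1]
        exact ⟨fun n hn => fstar_lt hdec hsm hn,
               fun n hn => by rw [fstar_self_le_one hn]; omega⟩

theorem stmt_9 : ∀ i : ℕ, 1 ≤ i → ∀ d : ℕ, 1 ≤ d → d ≤ Ack i (lam (2 * i) d) := by
  intro i hi
  induction i with
  | zero => omega
  | succ i ih =>
      rcases Nat.eq_zero_or_pos i with h0 | h1
      · subst h0
        intro d hd
        show d ≤ Ack 1 (Nat.clog 2 d)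
        rw [ack1_pow]
        exact Nat.le_pow_clog (by norm_num) d
      · intro d hd
        have IH := ih h1
        obtain ⟨hdec, hsm⟩ := lam_props i h1
        have claim : ∀ m d : ℕ, (lam (2 * i))^[m] d ≤ 1 → d ≤ Ack (i + 1) m := by
          intro m
          induction m with
          | zero => intro d h; simpa [Ack] using h
          | succ m ihm =>
              intro d h
              by_cases hd2 : d ≤ 2
              · calc d ≤ 2 := hd2
                  _ = Ack (i + 1) 1 := (ack_one_right (i + 1) (by omega)).symm
                  _ ≤ Ack (i + 1) (m + 1) := ack_mono (i + 1) (by omega)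
              · rw [Function.iterate_succ_apply] at h
                have h1' : lam (2 * i) d ≤ Ack (i + 1) m := ihm _ h
                have h2' : d ≤ Ack i (lam (2 * i) d) := IH d (by omega)
                have h3' : d ≤ Ack i (Ack (i + 1) m) :=
                  h2'.trans (ack_mono i h1')
                rcases m with _ | m
                · have : Ack i (Ack (i + 1) 0) = 2 := by
                    have : Ack (i + 1) 0 = 1 := by rw [Ack]
                    rw [this]; exact ack_one_right i h1
                  omega
                · have heq : Ack (i + 1) (m + 2) = Ack i (Ack (i + 1) (m + 1)) := by
                    rw [Ack]
                  show d ≤ Ack (i + 1) (m + 2)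
                  omega
        rw [lam_even_succ i h1]
        exact claim _ d (fstar_spec hdec hsm d)
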